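/- Let k₂, k₁, k₀ ∈ ℝ with k₂ ≠ 0, and set α = k₂k₀ − k₁²/4. Let y : ℝ → ℝ and t₀ ∈ ℝ; set X(t) = (k₁ − 2t)/(2k₂) and x₀ = X(t₀), Y = y(x₀). Suppose Y + x₀ ≠ 0 and y has derivative (k₂Y² + k₁Y + k₀)/(Y + x₀) at x₀. Define u(t) = −1/(k₂·(y(X(t)) + X(t))). Then u has derivative (α + t₀²)·u(t₀)³ − (2t₀ + 1)·u(t₀)² + u(t₀) at t₀. Hence in the case k₃ = 0, k₂ ≠ 0 the canonical AIL equation reduces to the 1-parameter representative u' = (α + x²)u³ − (2x + 1)u² + u. -/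

import Mathlib

/-- In the case `k₃ = 0, k₂ ≠ 0`, the canonical AIL equation
`y' = (k₂y² + k₁y + k₀)/(y + x)` reduces, by the change of variables
`{x = (k₁ − 2t)/(2k₂), u = −1/(k₂(y + x))}` and the new parameter
`α = k₂k₀ − k₁²/4`, to the 1-parameter representative
`u' = (α + x²)u³ − (2x + 1)u² + u`. -/
theorem AIL4_case_k3_eq_zero
    (k₂ k₁ k₀ : ℝ) (hk₂ : k₂ ≠ 0) (α : ℝ) (hα : α = k₂ * k₀ - k₁ ^ 2 / 4)
    (y : ℝ → ℝ) (t₀ : ℝ) (X : ℝ → ℝ)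
    (hX : X = fun t => (k₁ - 2 * t) / (2 * k₂))
    (x₀ Y : ℝ) (hx₀ : x₀ = X t₀) (hY : Y = y x₀)
    (h1 : Y + x₀ ≠ 0)
    (hy : HasDerivAt y ((k₂ * Y ^ 2 + k₁ * Y + k₀) / (Y + x₀)) x₀)
    (u : ℝ → ℝ) (hu : u = fun t => -1 / (k₂ * (y (X t) + X t))) :
    HasDerivAt u
      ((α + t₀ ^ 2) * (u t₀) ^ 3 - (2 * t₀ + 1) * (u t₀) ^ 2 + u t₀) t₀ := by
  set y' := (k₂ * Y ^ 2 + k₁ * Y + k₀) / (Y + x₀) with hy'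
  have hXd : HasDerivAt X (-1 / k₂) t₀ := by
    subst hX
    have h := (((hasDerivAt_id t₀).const_mul 2).const_sub k₁).div_const (2 * k₂)
    have h2 : (fun x : ℝ => (k₁ - 2 * id x) / (2 * k₂)) = fun t => (k₁ - 2 * t) / (2 * k₂) := rfl
    rw [h2] at h
    convert h using 1
    · rfl
    · rfl
    · rw [div_eq_div_iff hk₂ (mul_ne_zero two_ne_zero hk₂)]; ring
  have hw : HasDerivAt (fun t => y (X t) + X t) (y' * (-1 / k₂) + (-1 / k₂)) t₀ := by
    have hcomp : HasDerivAt (fun t => y (X t)) (y' * (-1 / k₂)) t₀ := by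
      have := (hx₀ ▸ hy).comp t₀ hXd
      exact this
    exact hcomp.add hXd
  have hne : k₂ * (y (X t₀) + X t₀) ≠ 0 := by
    rw [← hx₀, ← hY]
    exact mul_ne_zero hk₂ h1
  have hne' : y (X t₀) + X t₀ ≠ 0 := by
    rw [← hx₀, ← hY]; exact h1
  have hud : HasDerivAt u
      (-(-1) * (k₂ * (y' * (-1 / k₂) + (-1 / k₂))) / (k₂ * (y (X t₀) + X t₀)) ^ 2) t₀ := by
    rw [hu]
    exact HasDerivAt.div (hasDerivAt_const _ _) ((hw.const_mul k₂)) hne |>.congr_deriv (by ring)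
  convert hud using 1
  have hu0 : u t₀ = -1 / (k₂ * (Y + x₀)) := by
    rw [hu]; simp only [← hx₀, ← hY]
  have hx₀' : x₀ = (k₁ - 2 * t₀) / (2 * k₂) := by rw [hx₀, hX]
  have hk₁ : k₁ = 2 * k₂ * x₀ + 2 * t₀ := by rw [hx₀']; field_simp; ring
  rw [hu0, ← hx₀, ← hY, hy', hα, hk₁]
  field_simp
  ring
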